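/- arXiv:1706.01266 — 12 statements merged into one kernel-verified Lean document; each statement's English description precedes it below -/
import Mathlib

section
/- Let p ≥ 3 be prime, a, b ∈ E_p = {x ∈ ℚ_p : |x−1|_p < 1}, and define g(u) = a(b²u² + 1)/(b² + u²). Then g maps E_p into E_p; more precisely |g(u) − 1|_p ≤ 1/p for every u ∈ E_p. -/
theorem stmt4 (p : ℕ) [Fact p.Prime] (hp : 3 ≤ p) (a b : ℚ_[p])
    (ha : ‖a - 1‖ < 1) (hb : ‖b - 1‖ < 1) (u : ℚ_[p]) (hu : ‖u - 1‖ < 1) :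
    ‖a * (b ^ 2 * u ^ 2 + 1) / (b ^ 2 + u ^ 2) - 1‖ ≤ (p : ℝ)⁻¹ := by
  have hlt : ∀ x : ℚ_[p], ‖x‖ < 1 → ‖x‖ ≤ (p : ℝ)⁻¹ := by
    intro x hx
    have := (Padic.norm_le_pow_iff_norm_lt_pow_add_one x (-1)).2 (by simpa using hx)
    simpa using this
  have hpinv_nonneg : (0:ℝ) ≤ (p:ℝ)⁻¹ := by positivity
  have hfp : (p:ℝ)⁻¹ < 1 := by
    apply inv_lt_one_of_one_lt₀
    exact_mod_cast lt_of_lt_of_le (by norm_num) hp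
  have h1 : ∀ x : ℚ_[p], ‖x - 1‖ < 1 → ‖x‖ = 1 := by
    intro x hx
    have hxe : x = (x - 1) + 1 := by ring
    rw [hxe, Padic.add_eq_max_of_ne (by simp; exact ne_of_lt hx)]
    simp [le_of_lt hx]
  have hb1 : ‖b‖ = 1 := h1 b hb
  have hu1 : ‖u‖ = 1 := h1 u hu
  have hsq : ∀ x : ℚ_[p], ‖x - 1‖ < 1 → ‖x‖ = 1 → ‖x ^ 2 - 1‖ ≤ (p:ℝ)⁻¹ := by
    intro x hx hx1
    have he : x ^ 2 - 1 = (x - 1) * (x + 1) := by ring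
    rw [he, norm_mul]
    have h2 : ‖x + 1‖ ≤ 1 := by
      calc ‖x + 1‖ ≤ max ‖x‖ ‖(1:ℚ_[p])‖ := Padic.nonarchimedean x 1
        _ ≤ 1 := by simp [hx1]
    calc ‖x - 1‖ * ‖x + 1‖ ≤ (p:ℝ)⁻¹ * 1 :=
          mul_le_mul (hlt _ hx) h2 (norm_nonneg _) hpinv_nonneg
      _ = (p:ℝ)⁻¹ := by ring
  have hβ : ‖b ^ 2 - 1‖ ≤ (p:ℝ)⁻¹ := hsq b hb hb1
  have hγ : ‖u ^ 2 - 1‖ ≤ (p:ℝ)⁻¹ := hsq u hu hu1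
  have hα : ‖a - 1‖ ≤ (p:ℝ)⁻¹ := hlt _ ha
  -- norm of 2 is 1
  have h2n : ‖(2:ℚ_[p])‖ = 1 := by
    have hle : ‖((2:ℤ):ℚ_[p])‖ ≤ 1 := Padic.norm_int_le_one 2
    have hnlt : ¬ ‖((2:ℤ):ℚ_[p])‖ < 1 := by
      rw [Padic.norm_intCast_lt_one_iff]
      intro h
      have := Int.le_of_dvd (by norm_num) h
      omega
    push_cast at hle hnlt
    linarith
  -- denominator norm is 1
  have hden : ‖b ^ 2 + u ^ 2‖ = 1 := by
    have he : b ^ 2 + u ^ 2 = 2 + ((b ^ 2 - 1) + (u ^ 2 - 1)) := by ring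
    have hrest : ‖(b ^ 2 - 1) + (u ^ 2 - 1)‖ < 1 := by
      calc ‖(b ^ 2 - 1) + (u ^ 2 - 1)‖ ≤ max ‖b ^ 2 - 1‖ ‖u ^ 2 - 1‖ :=
            Padic.nonarchimedean _ _
        _ ≤ (p:ℝ)⁻¹ := max_le hβ hγ
        _ < 1 := hfp
    rw [he, Padic.add_eq_max_of_ne (by rw [h2n]; exact (ne_of_lt hrest).symm)]
    rw [h2n]
    exact max_eq_left (le_of_lt hrest)
  have hden0 : b ^ 2 + u ^ 2 ≠ 0 := by
    intro h; rw [h] at hden; simp at hden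
  -- numerator
  have hnum : ‖a * (b ^ 2 * u ^ 2 + 1) - (b ^ 2 + u ^ 2)‖ ≤ (p:ℝ)⁻¹ := by
    have he : a * (b ^ 2 * u ^ 2 + 1) - (b ^ 2 + u ^ 2) =
        (a - 1) * (b ^ 2 * u ^ 2 + 1) + (b ^ 2 - 1) * (u ^ 2 - 1) := by ring
    rw [he]
    have h1' : ‖(a - 1) * (b ^ 2 * u ^ 2 + 1)‖ ≤ (p:ℝ)⁻¹ := by
      rw [norm_mul]
      have : ‖b ^ 2 * u ^ 2 + 1‖ ≤ 1 := by
        calc ‖b ^ 2 * u ^ 2 + 1‖ ≤ max ‖b ^ 2 * u ^ 2‖ ‖(1:ℚ_[p])‖ :=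
              Padic.nonarchimedean _ _
          _ ≤ 1 := by simp [norm_mul, norm_pow, hb1, hu1]
      calc ‖a - 1‖ * ‖b ^ 2 * u ^ 2 + 1‖ ≤ (p:ℝ)⁻¹ * 1 :=
            mul_le_mul hα this (norm_nonneg _) hpinv_nonneg
        _ = (p:ℝ)⁻¹ := by ring
    have h2' : ‖(b ^ 2 - 1) * (u ^ 2 - 1)‖ ≤ (p:ℝ)⁻¹ := by
      rw [norm_mul]
      calc ‖b ^ 2 - 1‖ * ‖u ^ 2 - 1‖ ≤ (p:ℝ)⁻¹ * 1 :=
            mul_le_mul hβ (le_trans hγ (le_of_lt hfp)) (norm_nonneg _) hpinv_nonneg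
        _ = (p:ℝ)⁻¹ := by ring
    calc ‖_ + _‖ ≤ max ‖(a - 1) * (b ^ 2 * u ^ 2 + 1)‖ ‖(b ^ 2 - 1) * (u ^ 2 - 1)‖ :=
          Padic.nonarchimedean _ _
      _ ≤ (p:ℝ)⁻¹ := max_le h1' h2'
  have he : a * (b ^ 2 * u ^ 2 + 1) / (b ^ 2 + u ^ 2) - 1 =
      (a * (b ^ 2 * u ^ 2 + 1) - (b ^ 2 + u ^ 2)) / (b ^ 2 + u ^ 2) := by
    field_simp
  rw [he, norm_div, hden, div_one]
  exact hnum
end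

section
/- Let p ≥ 3 be prime, a, b ∈ E_p, and g(u) = a(b²u² + 1)/(b² + u²). Then g is a contraction on E_p: for all x, y ∈ E_p, |g(x) − g(y)|_p ≤ (1/p)|x − y|_p. -/
theorem stmt5 (p : ℕ) [Fact p.Prime] (hp : 3 ≤ p) (a b : ℚ_[p])
    (ha : ‖a - 1‖ < 1) (hb : ‖b - 1‖ < 1) (x y : ℚ_[p])
    (hx : ‖x - 1‖ < 1) (hy : ‖y - 1‖ < 1) :
    ‖a * (b ^ 2 * x ^ 2 + 1) / (b ^ 2 + x ^ 2) -
      a * (b ^ 2 * y ^ 2 + 1) / (b ^ 2 + y ^ 2)‖ ≤ (p : ℝ)⁻¹ * ‖x - y‖ := by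
  -- norm one for elements close to 1
  have hone : ∀ z : ℚ_[p], ‖z - 1‖ < 1 → ‖z‖ = 1 := by
    intro z hz
    have : z = (z - 1) + 1 := by ring
    rw [this, Padic.add_eq_max_of_ne (by simpa using hz.ne)]
    simp [le_of_lt hz]
  have hna := hone a ha
  have hnb := hone b hb
  have hnx := hone x hx
  have hny := hone y hy
  -- ‖2‖ = 1
  have h2 : ‖(2 : ℚ_[p])‖ = 1 := by
    have hle : ‖(2 : ℚ_[p])‖ ≤ 1 := by
      have := Padic.norm_int_le_one (p := p) 2
      simpa using this
    have hlt : ¬ ‖(2 : ℚ_[p])‖ < 1 := by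
      intro h
      have := (Padic.norm_intCast_lt_one_iff (p := p) (k := 2)).mp (by simpa using h)
      have hp2 : (p : ℤ) ∣ 2 := this
      have h1 : (p : ℤ) ≤ 2 := Int.le_of_dvd two_pos hp2
      have h3 : (3 : ℤ) ≤ p := by exact_mod_cast hp
      omega
    linarith [lt_or_eq_of_le hle |>.resolve_left hlt]
  -- ‖b^2+x^2‖ = 1 for z close to 1
  have hden : ∀ z : ℚ_[p], ‖z - 1‖ < 1 → ‖b ^ 2 + z ^ 2‖ = 1 := by
    intro z hz
    have key : b ^ 2 + z ^ 2 = ((b - 1) * (b + 1) + (z - 1) * (z + 1)) + 2 := by ring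
    have hbz : ‖z‖ = 1 := hone z hz
    have hb1 : ‖b + 1‖ ≤ 1 := by
      calc ‖b + 1‖ ≤ max ‖b‖ ‖(1 : ℚ_[p])‖ := Padic.nonarchimedean _ _
        _ ≤ 1 := by simp [hnb]
    have hz1 : ‖z + 1‖ ≤ 1 := by
      calc ‖z + 1‖ ≤ max ‖z‖ ‖(1 : ℚ_[p])‖ := Padic.nonarchimedean _ _
        _ ≤ 1 := by simp [hbz]
    have hsmall : ‖(b - 1) * (b + 1) + (z - 1) * (z + 1)‖ < 1 := by
      calc ‖(b - 1) * (b + 1) + (z - 1) * (z + 1)‖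
          ≤ max (‖(b - 1) * (b + 1)‖) (‖(z - 1) * (z + 1)‖) := Padic.nonarchimedean _ _
        _ < 1 := by
            rw [max_lt_iff, norm_mul, norm_mul]
            constructor
            · calc ‖b - 1‖ * ‖b + 1‖ ≤ ‖b - 1‖ * 1 := by
                    exact mul_le_mul_of_nonneg_left hb1 (norm_nonneg _)
                _ < 1 := by simpa using hb
            · calc ‖z - 1‖ * ‖z + 1‖ ≤ ‖z - 1‖ * 1 := by
                    exact mul_le_mul_of_nonneg_left hz1 (norm_nonneg _)
                _ < 1 := by simpa using hz
    rw [key, Padic.add_eq_max_of_ne (by rw [h2]; exact hsmall.ne), h2]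
    exact max_eq_right (h2 ▸ hsmall.le)
  have hdx := hden x hx
  have hdy := hden y hy
  have hdx0 : b ^ 2 + x ^ 2 ≠ 0 := by intro h; rw [h] at hdx; simp at hdx
  have hdy0 : b ^ 2 + y ^ 2 ≠ 0 := by intro h; rw [h] at hdy; simp at hdy
  -- algebraic identity
  have key : a * (b ^ 2 * x ^ 2 + 1) / (b ^ 2 + x ^ 2) -
      a * (b ^ 2 * y ^ 2 + 1) / (b ^ 2 + y ^ 2) =
      a * (b ^ 4 - 1) * (x - y) * (x + y) / ((b ^ 2 + x ^ 2) * (b ^ 2 + y ^ 2)) := by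
    field_simp
    ring
  rw [key]
  -- ‖b^4 - 1‖ ≤ p⁻¹
  have hb4 : ‖b ^ 4 - 1‖ ≤ (p : ℝ)⁻¹ := by
    have hfac : b ^ 4 - 1 = (b - 1) * ((b + 1) * (b ^ 2 + 1)) := by ring
    have hb1 : ‖b + 1‖ ≤ 1 := by
      calc ‖b + 1‖ ≤ max ‖b‖ ‖(1 : ℚ_[p])‖ := Padic.nonarchimedean _ _
        _ ≤ 1 := by simp [hnb]
    have hb2 : ‖b ^ 2 + 1‖ ≤ 1 := by
      calc ‖b ^ 2 + 1‖ ≤ max ‖b ^ 2‖ ‖(1 : ℚ_[p])‖ := Padic.nonarchimedean _ _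
        _ ≤ 1 := by simp [norm_pow, hnb]
    have hb1' : ‖b - 1‖ ≤ (p : ℝ)⁻¹ := by
      have := (Padic.norm_le_pow_iff_norm_lt_pow_add_one (b - 1) (-1)).mpr (by
        simpa using hb)
      simpa [zpow_neg] using this
    calc ‖b ^ 4 - 1‖ = ‖b - 1‖ * ‖(b + 1) * (b ^ 2 + 1)‖ := by rw [hfac, norm_mul]
      _ ≤ (p : ℝ)⁻¹ * 1 := by
          apply mul_le_mul hb1' _ (norm_nonneg _) (by positivity)
          rw [norm_mul]
          exact mul_le_one₀ hb1 (norm_nonneg _) hb2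
      _ = (p : ℝ)⁻¹ := mul_one _
  have hxy : ‖x + y‖ ≤ 1 := by
    calc ‖x + y‖ ≤ max ‖x‖ ‖y‖ := Padic.nonarchimedean _ _
      _ ≤ 1 := by simp [hnx, hny]
  rw [norm_div, norm_mul, norm_mul, norm_mul, norm_mul, hna,
    hdx, hdy, one_mul, mul_one, div_one]
  calc ‖b ^ 4 - 1‖ * ‖x - y‖ * ‖x + y‖ ≤ ((p : ℝ)⁻¹ * ‖x - y‖) * 1 :=
        mul_le_mul (mul_le_mul_of_nonneg_right hb4 (norm_nonneg _)) hxy (norm_nonneg _)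
          (by positivity)
    _ = (p : ℝ)⁻¹ * ‖x - y‖ := mul_one _
end

section
/- Let p ≥ 3 be prime with p ≡ 3 (mod 4), and a, b ∈ E_p. Then the cubic equation x³ − ab²x² + b²x − a = 0 has exactly one solution in ℚ_p, namely the unique fixed point x₀ ∈ E_p of g(u) = a(b²u² + 1)/(b² + u²). -/
variable {p : ℕ} [Fact p.Prime]

lemma stmt7_aux_toZMod_zero_iff (z : ℤ_[p]) : PadicInt.toZMod z = 0 ↔ ‖z‖ < 1 := by
  rw [← RingHom.mem_ker, PadicInt.ker_toZMod, PadicInt.maximalIdeal_eq_span_p,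
    Ideal.mem_span_singleton, ← PadicInt.norm_lt_one_iff_dvd]

lemma stmt7_aux_norm_one {x : ℚ_[p]} (h : ‖x - 1‖ < 1) : ‖x‖ = 1 := by
  have h1 : ‖x - 1‖ ≠ ‖(1 : ℚ_[p])‖ := by rw [norm_one]; exact ne_of_lt h
  have h2 := Padic.add_eq_max_of_ne h1
  rw [sub_add_cancel] at h2
  rw [h2, norm_one, max_eq_right h.le]

lemma stmt7_aux_resid_one_iff {x : ℚ_[p]} (hle : ‖x‖ ≤ 1) :
    PadicInt.toZMod (⟨x, hle⟩ : ℤ_[p]) = 1 ↔ ‖x - 1‖ < 1 := by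
  set z : ℤ_[p] := ⟨x, hle⟩ with hz
  have h := stmt7_aux_toZMod_zero_iff (z - 1)
  rw [map_sub, map_one, sub_eq_zero] at h
  exact h

lemma stmt7_aux_ne_zero (hp : 3 ≤ p) (e : ℚ_[p]) (z : ℤ_[p]) (hcoe : (z : ℚ_[p]) = e)
    (hres : PadicInt.toZMod z = 2) : e ≠ 0 := by
  intro h0
  have hz : z = 0 := PadicInt.coe_eq_zero.1 (hcoe.trans h0)
  rw [hz, map_zero] at hres
  have h2 : ((2 : ℕ) : ZMod p) = 0 := by exact_mod_cast hres.symm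
  rw [ZMod.natCast_eq_zero_iff] at h2
  have := Nat.le_of_dvd (by norm_num) h2
  omega

theorem stmt7 (p : ℕ) [Fact p.Prime] (hp : 3 ≤ p) (hp4 : p % 4 = 3)
    (a b : ℚ_[p]) (ha : ‖a - 1‖ < 1) (hb : ‖b - 1‖ < 1) :
    (∃! x : ℚ_[p], x ^ 3 - a * b ^ 2 * x ^ 2 + b ^ 2 * x - a = 0) ∧
    ∀ x : ℚ_[p], x ^ 3 - a * b ^ 2 * x ^ 2 + b ^ 2 * x - a = 0 →
      ‖x - 1‖ < 1 ∧ a * (b ^ 2 * x ^ 2 + 1) / (b ^ 2 + x ^ 2) = x := by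
  have ha1 : ‖a‖ = 1 := stmt7_aux_norm_one ha
  have hb1 : ‖b‖ = 1 := stmt7_aux_norm_one hb
  set A : ℤ_[p] := ⟨a, ha1.le⟩ with hAdef
  set B : ℤ_[p] := ⟨b, hb1.le⟩ with hBdef
  have hφA : PadicInt.toZMod A = 1 := (stmt7_aux_resid_one_iff ha1.le).2 ha
  have hφB : PadicInt.toZMod B = 1 := (stmt7_aux_resid_one_iff hb1.le).2 hb
  -- every root is close to 1
  have hnear : ∀ x : ℚ_[p], x ^ 3 - a * b ^ 2 * x ^ 2 + b ^ 2 * x - a = 0 →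
      ∃ hle : ‖x‖ ≤ 1, ‖x - 1‖ < 1 ∧ PadicInt.toZMod (⟨x, hle⟩ : ℤ_[p]) = 1 := by
    intro x hx
    have hle : ‖x‖ ≤ 1 := by
      by_contra hgt
      push_neg at hgt
      have e' : x ^ 3 = a * b ^ 2 * x ^ 2 + (-(b ^ 2 * x) + a) := by linear_combination hx
      have b1 : ‖a * b ^ 2 * x ^ 2‖ = ‖x‖ ^ 2 := by
        simp [norm_mul, norm_pow, ha1, hb1]
      have b2 : ‖-(b ^ 2 * x) + a‖ ≤ ‖x‖ ^ 2 := by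
        refine le_trans (Padic.nonarchimedean _ _) ?_
        rw [norm_neg, ha1]
        have hbx : ‖b ^ 2 * x‖ = ‖x‖ := by simp [norm_mul, norm_pow, hb1]
        rw [hbx]
        apply max_le <;> nlinarith
      have key : ‖x‖ ^ 3 ≤ ‖x‖ ^ 2 := by
        calc ‖x‖ ^ 3 = ‖x ^ 3‖ := (norm_pow _ _).symm
          _ = ‖a * b ^ 2 * x ^ 2 + (-(b ^ 2 * x) + a)‖ := by rw [e']
          _ ≤ max ‖a * b ^ 2 * x ^ 2‖ ‖-(b ^ 2 * x) + a‖ := Padic.nonarchimedean _ _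
          _ ≤ ‖x‖ ^ 2 := max_le b1.le b2
      have h0 : (0:ℝ) < ‖x‖ := by linarith
      nlinarith [mul_lt_mul_of_pos_left hgt (mul_pos h0 h0)]
    refine ⟨hle, ?_⟩
    set Z : ℤ_[p] := ⟨x, hle⟩ with hZdef
    have hZ : Z ^ 3 - A * B ^ 2 * Z ^ 2 + B ^ 2 * Z - A = 0 := by
      have h0 : ((Z ^ 3 - A * B ^ 2 * Z ^ 2 + B ^ 2 * Z - A : ℤ_[p]) : ℚ_[p]) = 0 := by
        push_cast
        exact hx
      exact PadicInt.coe_eq_zero.1 h0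
    have hres : PadicInt.toZMod Z ^ 3 - PadicInt.toZMod Z ^ 2 + PadicInt.toZMod Z - 1 = 0 := by
      have := congrArg PadicInt.toZMod hZ
      simpa [map_sub, map_add, map_mul, map_pow, hφA, hφB] using this
    have hfac : (PadicInt.toZMod Z - 1) * (PadicInt.toZMod Z ^ 2 + 1) = 0 := by
      linear_combination hres
    rcases mul_eq_zero.1 hfac with h1 | h2
    · have ht1 : PadicInt.toZMod Z = 1 := by linear_combination h1
      exact ⟨(stmt7_aux_resid_one_iff hle).1 ht1, ht1⟩
    · exfalso
      have hsq : IsSquare (-1 : ZMod p) := ⟨PadicInt.toZMod Z, by linear_combination -h2⟩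
      exact (ZMod.exists_sq_eq_neg_one_iff.1 hsq) hp4
  -- uniqueness
  have huniq : ∀ x y : ℚ_[p], x ^ 3 - a * b ^ 2 * x ^ 2 + b ^ 2 * x - a = 0 →
      y ^ 3 - a * b ^ 2 * y ^ 2 + b ^ 2 * y - a = 0 → x = y := by
    intro x y hx hy
    obtain ⟨hxle, hx1, hφX⟩ := hnear x hx
    obtain ⟨hyle, hy1, hφY⟩ := hnear y hy
    set X : ℤ_[p] := ⟨x, hxle⟩ with hXdef
    set Y : ℤ_[p] := ⟨y, hyle⟩ with hYdef
    have hfac : (x - y) * (x ^ 2 + x * y + y ^ 2 - a * b ^ 2 * (x + y) + b ^ 2) = 0 := by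
      linear_combination hx - hy
    have hEne : x ^ 2 + x * y + y ^ 2 - a * b ^ 2 * (x + y) + b ^ 2 ≠ 0 := by
      refine stmt7_aux_ne_zero hp _ (X ^ 2 + X * Y + Y ^ 2 - A * B ^ 2 * (X + Y) + B ^ 2) ?_ ?_
      · push_cast
        rfl
      · simp only [map_add, map_sub, map_mul, map_pow, hφX, hφY, hφA, hφB]
        norm_num
    rcases mul_eq_zero.1 hfac with h | h
    · exact sub_eq_zero.1 h
    · exact absurd h hEne
  -- existence via Hensel's lemma
  have h2Z : (PadicInt.toZMod (p := p)) 2 = 2 := map_ofNat _ 2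
  have hdres : PadicInt.toZMod (3 - 2 * (A * B ^ 2) + B ^ 2) = 2 := by
    simp only [map_add, map_sub, map_mul, map_pow, map_ofNat, hφA, hφB]
    norm_num
  have hdnorm : ‖(3 - 2 * (A * B ^ 2) + B ^ 2 : ℤ_[p])‖ = 1 := by
    refine le_antisymm (PadicInt.norm_le_one _) ?_
    by_contra hlt
    push_neg at hlt
    have h0 := (stmt7_aux_toZMod_zero_iff _).2 hlt
    rw [hdres] at h0
    have h2 : ((2 : ℕ) : ZMod p) = 0 := by exact_mod_cast h0
    rw [ZMod.natCast_eq_zero_iff] at h2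
    have := Nat.le_of_dvd (by norm_num) h2
    omega
  set F : Polynomial ℤ_[p] :=
    Polynomial.X ^ 3 - Polynomial.C (A * B ^ 2) * Polynomial.X ^ 2
      + Polynomial.C (B ^ 2) * Polynomial.X - Polynomial.C A with hFdef
  have hevalF : ∀ z : ℤ_[p], F.eval z = z ^ 3 - A * B ^ 2 * z ^ 2 + B ^ 2 * z - A := by
    intro z
    simp [hFdef]
  have hderivF : F.derivative.eval 1 = 3 - 2 * (A * B ^ 2) + B ^ 2 := by
    simp [hFdef, Polynomial.derivative_pow]
    ring
  have hF1 : ‖F.eval 1‖ < 1 := by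
    rw [hevalF]
    have he : (1 : ℤ_[p]) ^ 3 - A * B ^ 2 * 1 ^ 2 + B ^ 2 * 1 - A = (1 - A) * (1 + B ^ 2) := by
      ring
    rw [he, norm_mul]
    have h1A : ‖(1 : ℤ_[p]) - A‖ < 1 := by
      rw [PadicInt.norm_def]
      calc ‖((1 - A : ℤ_[p]) : ℚ_[p])‖ = ‖(1 : ℚ_[p]) - a‖ := by push_cast; rfl
        _ = ‖a - 1‖ := by rw [norm_sub_rev]
        _ < 1 := ha
    have h1B : ‖(1 : ℤ_[p]) + B ^ 2‖ ≤ 1 := PadicInt.norm_le_one _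
    calc ‖(1 : ℤ_[p]) - A‖ * ‖(1 : ℤ_[p]) + B ^ 2‖ ≤ ‖(1 : ℤ_[p]) - A‖ :=
          mul_le_of_le_one_right (norm_nonneg _) h1B
      _ < 1 := h1A
  have hnorm : ‖F.eval 1‖ < ‖F.derivative.eval 1‖ ^ 2 := by
    rw [hderivF, hdnorm]
    simpa using hF1
  obtain ⟨z, hz, -, -, -⟩ := hensels_lemma hnorm
  have hz' : z ^ 3 - A * B ^ 2 * z ^ 2 + B ^ 2 * z - A = 0 := by rw [← hevalF]; exact hz
  have hx₀ : (z : ℚ_[p]) ^ 3 - a * b ^ 2 * (z : ℚ_[p]) ^ 2 + b ^ 2 * (z : ℚ_[p]) - a = 0 := by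
    have := congrArg (fun t : ℤ_[p] => (t : ℚ_[p])) hz'
    push_cast at this
    exact this
  constructor
  · exact ⟨(z : ℚ_[p]), hx₀, fun y hy => huniq y (z : ℚ_[p]) hy hx₀⟩
  · intro x hx
    obtain ⟨hxle, hx1, hφX⟩ := hnear x hx
    refine ⟨hx1, ?_⟩
    set X : ℤ_[p] := ⟨x, hxle⟩ with hXdef
    have hden : b ^ 2 + x ^ 2 ≠ 0 := by
      refine stmt7_aux_ne_zero hp _ (B ^ 2 + X ^ 2) ?_ ?_
      · push_cast
        rfl
      · simp only [map_add, map_pow, hφX, hφB]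
        norm_num
    rw [div_eq_iff hden]
    linear_combination -hx
end

section
/- Let p ≥ 3 be prime, a, b ∈ E_p, and x₀ the unique fixed point of g(u) = a(b²u² + 1)/(b² + u²) in E_p. If x₁ ∈ ℚ_p is any fixed point of g different from x₀, then |x₁|_p = 1 and |x₁ − 1|_p = 1; in particular x₁ ∉ E_p. -/
theorem stmt8 (p : ℕ) [Fact p.Prime] (hp : 3 ≤ p) (a b : ℚ_[p])
    (ha : ‖a - 1‖ < 1) (hb : ‖b - 1‖ < 1) (x₀ x₁ : ℚ_[p])
    (hx0 : ‖x₀ - 1‖ < 1) (hfix0 : a * (b ^ 2 * x₀ ^ 2 + 1) / (b ^ 2 + x₀ ^ 2) = x₀)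
    (hd : b ^ 2 + x₁ ^ 2 ≠ 0)
    (hfix1 : a * (b ^ 2 * x₁ ^ 2 + 1) / (b ^ 2 + x₁ ^ 2) = x₁)
    (hne : x₁ ≠ x₀) :
    ‖x₁‖ = 1 ∧ ‖x₁ - 1‖ = 1 := by
  have hprime := (Fact.out : p.Prime)
  -- ‖2‖ = 1
  have h2le : ‖(2 : ℚ_[p])‖ ≤ 1 := by
    have := Padic.norm_int_le_one (p := p) 2
    simpa using this
  have h2lt : ¬ ‖(2 : ℚ_[p])‖ < 1 := by
    intro h
    have : (p : ℤ) ∣ 2 := by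
      have := (Padic.norm_intCast_lt_one_iff (k := 2) (p := p)).1 (by simpa using h)
      exact this
    have : p ∣ 2 := Int.ofNat_dvd.mp (by simpa using this)
    have := Nat.le_of_dvd (by norm_num) this
    omega
  have h2 : ‖(2 : ℚ_[p])‖ = 1 := le_antisymm h2le (not_lt.mp h2lt)
  -- units near 1 have norm 1
  have norm_one_of : ∀ x : ℚ_[p], ‖x - 1‖ < 1 → ‖x‖ = 1 := by
    intro x h
    have hx : x = 1 + (x - 1) := by ring
    rw [hx, Padic.add_eq_max_of_ne]
    · simp [max_eq_left (le_of_lt (by simpa using h))]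
    · simp only [norm_one]
      intro hh
      rw [← hh] at h
      exact lt_irrefl _ h
  have ha1 : ‖a‖ = 1 := norm_one_of a ha
  have hb1 : ‖b‖ = 1 := norm_one_of b hb
  have hx01 : ‖x₀‖ = 1 := norm_one_of x₀ hx0
  have hx0ne : x₀ ≠ 0 := by intro h; rw [h] at hx01; simp at hx01
  -- ‖b+1‖ ≤ 1, ‖x₀+1‖ ≤ 1
  have hble : ‖b + 1‖ ≤ 1 := le_trans (Padic.nonarchimedean b 1) (by simp [hb1])
  have hx0le : ‖x₀ + 1‖ ≤ 1 := le_trans (Padic.nonarchimedean x₀ 1) (by simp [hx01])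
  have hb2 : ‖b ^ 2 - 1‖ < 1 := by
    have : b ^ 2 - 1 = (b - 1) * (b + 1) := by ring
    rw [this, Padic.padicNormE.mul]
    calc ‖b - 1‖ * ‖b + 1‖ ≤ ‖b - 1‖ * 1 := by
          exact mul_le_mul_of_nonneg_left hble (norm_nonneg _)
      _ < 1 := by simpa using hb
  have hx02 : ‖x₀ ^ 2 - 1‖ < 1 := by
    have : x₀ ^ 2 - 1 = (x₀ - 1) * (x₀ + 1) := by ring
    rw [this, Padic.padicNormE.mul]
    calc ‖x₀ - 1‖ * ‖x₀ + 1‖ ≤ ‖x₀ - 1‖ * 1 := by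
          exact mul_le_mul_of_nonneg_left hx0le (norm_nonneg _)
      _ < 1 := by simpa using hx0
  -- ‖ab² - 1‖ < 1
  have hab2 : ‖a * b ^ 2 - 1‖ < 1 := by
    have heq : a * b ^ 2 - 1 = (a - 1) * b ^ 2 + (b ^ 2 - 1) := by ring
    rw [heq]
    refine lt_of_le_of_lt (Padic.nonarchimedean _ _) (max_lt ?_ hb2)
    have hb2n : ‖b ^ 2‖ = 1 := by rw [sq, Padic.padicNormE.mul, hb1, one_mul]
    rw [Padic.padicNormE.mul, hb2n, mul_one]; exact ha
  -- denominator at x₀ nonzero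
  have hd0 : b ^ 2 + x₀ ^ 2 ≠ 0 := by
    intro h
    have heq : (2 : ℚ_[p]) = -(b ^ 2 - 1) + -(x₀ ^ 2 - 1) := by linear_combination h
    have hh : ‖(2 : ℚ_[p])‖ < 1 := by
      rw [heq]
      exact lt_of_le_of_lt (Padic.nonarchimedean _ _)
        (max_lt (by simpa [norm_sub_rev] using hb2) (by simpa [norm_sub_rev] using hx02))
    exact h2lt hh
  -- cubic equations
  have h1 : x₁ ^ 3 - a * b ^ 2 * x₁ ^ 2 + b ^ 2 * x₁ - a = 0 := by
    rw [div_eq_iff hd] at hfix1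
    linear_combination -hfix1
  have h0 : x₀ ^ 3 - a * b ^ 2 * x₀ ^ 2 + b ^ 2 * x₀ - a = 0 := by
    rw [div_eq_iff hd0] at hfix0
    linear_combination -hfix0
  set c : ℚ_[p] := x₀ - a * b ^ 2 with hc_def
  set e : ℚ_[p] := x₀ ^ 2 - a * b ^ 2 * x₀ + b ^ 2 with he_def
  have hQ : x₁ ^ 2 + c * x₁ + e = 0 := by
    have hfac : (x₁ - x₀) * (x₁ ^ 2 + c * x₁ + e) = 0 := by
      rw [hc_def, he_def]; linear_combination h1 - h0
    rcases mul_eq_zero.mp hfac with h | h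
    · exact absurd (sub_eq_zero.mp h) hne
    · exact h
  have he : x₀ * e = a := by rw [he_def]; linear_combination h0
  have he1 : ‖e‖ = 1 := by
    have : ‖x₀ * e‖ = 1 := by rw [he]; exact ha1
    rw [Padic.padicNormE.mul, hx01, one_mul] at this
    exact this
  have hcn : ‖c‖ < 1 := by
    have heq : c = (x₀ - 1) - (a * b ^ 2 - 1) := by rw [hc_def]; ring
    rw [heq, sub_eq_add_neg]
    refine lt_of_le_of_lt (Padic.nonarchimedean _ _) (max_lt hx0 ?_)
    simpa [norm_sub_rev] using hab2
  -- ‖x₁‖ = 1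
  have hx1n : ‖x₁‖ = 1 := by
    rcases lt_trichotomy ‖x₁‖ 1 with h | h | h
    · exfalso
      have heq : e = -(x₁ ^ 2 + c * x₁) := by linear_combination hQ
      have : ‖e‖ < 1 := by
        rw [heq, norm_neg]
        refine lt_of_le_of_lt (Padic.nonarchimedean _ _) (max_lt ?_ ?_)
        · rw [sq, Padic.padicNormE.mul]
          nlinarith [norm_nonneg x₁]
        · rw [Padic.padicNormE.mul]
          nlinarith [norm_nonneg x₁, norm_nonneg c]
      rw [he1] at this; exact lt_irrefl _ this
    · exact h
    · exfalso
      have heq : x₁ ^ 2 = -(c * x₁ + e) := by linear_combination hQ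
      have hsq : ‖x₁ ^ 2‖ = ‖x₁‖ * ‖x₁‖ := by rw [sq, Padic.padicNormE.mul]
      have hlt : ‖x₁ ^ 2‖ < ‖x₁‖ * ‖x₁‖ := by
        rw [heq, norm_neg]
        refine lt_of_le_of_lt (Padic.nonarchimedean _ _) (max_lt ?_ ?_)
        · rw [Padic.padicNormE.mul]
          calc ‖c‖ * ‖x₁‖ < 1 * ‖x₁‖ :=
                mul_lt_mul_of_pos_right hcn (lt_trans zero_lt_one h)
            _ = ‖x₁‖ := one_mul _
            _ < ‖x₁‖ * ‖x₁‖ := by nlinarith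
        · rw [he1]; nlinarith
      rw [hsq] at hlt; exact lt_irrefl _ hlt
  constructor
  · exact hx1n
  · have hle : ‖x₁ - 1‖ ≤ 1 := by
      have := Padic.nonarchimedean x₁ (-1)
      simpa [sub_eq_add_neg, hx1n] using this
    refine le_antisymm hle (not_lt.mp ?_)
    intro hlt
    have he1' : ‖e - 1‖ < 1 := by
      have hmul : x₀ * (e - 1) = (a - 1) - (x₀ - 1) := by linear_combination he
      have hh : ‖x₀ * (e - 1)‖ < 1 := by
        rw [hmul, sub_eq_add_neg]
        exact lt_of_le_of_lt (Padic.nonarchimedean _ _) (max_lt ha (by simpa [norm_sub_rev] using hx0))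
      rwa [Padic.padicNormE.mul, hx01, one_mul] at hh
    have hx12 : ‖x₁ ^ 2 - 1‖ < 1 := by
      have hfac2 : x₁ ^ 2 - 1 = (x₁ - 1) * (x₁ + 1) := by ring
      rw [hfac2, Padic.padicNormE.mul]
      have hle2 : ‖x₁ + 1‖ ≤ 1 := le_trans (Padic.nonarchimedean _ _) (by simp [hx1n])
      calc ‖x₁ - 1‖ * ‖x₁ + 1‖ ≤ ‖x₁ - 1‖ * 1 := mul_le_mul_of_nonneg_left hle2 (norm_nonneg _)
        _ < 1 := by simpa using hlt
    have heq : (2 : ℚ_[p]) = -(x₁ ^ 2 - 1) + (-(c * x₁) + -(e - 1)) := by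
      rw [hc_def, he_def] at hQ; linear_combination hQ
    have hfin : ‖(2 : ℚ_[p])‖ < 1 := by
      have n1 : ‖-(x₁ ^ 2 - 1)‖ < 1 := by rwa [norm_neg]
      have n2 : ‖-(c * x₁)‖ < 1 := by
        rw [norm_neg, Padic.padicNormE.mul, hx1n, mul_one]; exact hcn
      have n3 : ‖-(e - 1)‖ < 1 := by rwa [norm_neg]
      calc ‖(2 : ℚ_[p])‖ = ‖-(x₁ ^ 2 - 1) + (-(c * x₁) + -(e - 1))‖ := by rw [← heq]
        _ ≤ max ‖-(x₁ ^ 2 - 1)‖ ‖-(c * x₁) + -(e - 1)‖ := Padic.nonarchimedean _ _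
        _ ≤ max ‖-(x₁ ^ 2 - 1)‖ (max ‖-(c * x₁)‖ ‖-(e - 1)‖) :=
            max_le_max le_rfl (Padic.nonarchimedean _ _)
        _ < 1 := max_lt n1 (max_lt n2 n3)
    exact h2lt hfin
end

section
/- Let p ≥ 3 be prime, a, b ∈ E_p, and let x₀ ∈ E_p be the fixed point of g(u) = a(b²u² + 1)/(b² + u²). Then |x₀ − a|_p = |x₀ − 1|_p · |b − 1|_p; in particular |x₀ − a|_p < |b − 1|_p when b ≠ 1. -/
theorem stmt9 (p : ℕ) [Fact p.Prime] (hp : 3 ≤ p) (a b : ℚ_[p])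
    (ha : ‖a - 1‖ < 1) (hb : ‖b - 1‖ < 1) (x₀ : ℚ_[p])
    (hx0 : ‖x₀ - 1‖ < 1) (hfix0 : a * (b ^ 2 * x₀ ^ 2 + 1) / (b ^ 2 + x₀ ^ 2) = x₀) :
    ‖x₀ - a‖ = ‖x₀ - 1‖ * ‖b - 1‖ ∧ (b ≠ 1 → ‖x₀ - a‖ < ‖b - 1‖) := by
  have hpprime := (Fact.out : p.Prime)
  -- ‖2‖ = 1
  have h2 : ‖(2 : ℚ_[p])‖ = 1 := by
    have hle : ‖((2 : ℤ) : ℚ_[p])‖ ≤ 1 := Padic.norm_int_le_one 2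
    have hnlt : ¬ ‖((2 : ℤ) : ℚ_[p])‖ < 1 := by
      rw [Padic.norm_intCast_lt_one_iff]
      intro h
      have := Int.le_of_dvd (by norm_num) h
      omega
    push_cast at hle hnlt
    linarith [lt_or_eq_of_le hle]
  have haone : ‖a‖ = 1 := by
    have : a = (a - 1) + 1 := by ring
    rw [this, Padic.add_eq_max_of_ne (by simp; linarith)]
    simp [le_of_lt ha]
  -- ‖b+1‖ = 1
  have hb1 : ‖b + 1‖ = 1 := by
    have : b + 1 = (b - 1) + 2 := by ring
    rw [this, Padic.add_eq_max_of_ne (by rw [h2]; exact ne_of_lt hb)]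
    rw [h2]; exact max_eq_right (le_of_lt hb)
  have hx1 : ‖x₀ + 1‖ = 1 := by
    have : x₀ + 1 = (x₀ - 1) + 2 := by ring
    rw [this, Padic.add_eq_max_of_ne (by rw [h2]; exact ne_of_lt hx0)]
    rw [h2]; exact max_eq_right (le_of_lt hx0)
  have hbsq : ‖b ^ 2 - 1‖ = ‖b - 1‖ := by
    have : b ^ 2 - 1 = (b - 1) * (b + 1) := by ring
    rw [this, norm_mul, hb1, mul_one]
  have hxsq : ‖x₀ ^ 2 - 1‖ = ‖x₀ - 1‖ := by
    have : x₀ ^ 2 - 1 = (x₀ - 1) * (x₀ + 1) := by ring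
    rw [this, norm_mul, hx1, mul_one]
  -- ‖b² + x₀²‖ = 1
  have hden : ‖b ^ 2 + x₀ ^ 2‖ = 1 := by
    have heq : b ^ 2 + x₀ ^ 2 = ((b ^ 2 - 1) + (x₀ ^ 2 - 1)) + 2 := by ring
    have hsmall : ‖(b ^ 2 - 1) + (x₀ ^ 2 - 1)‖ < 1 := by
      calc ‖(b ^ 2 - 1) + (x₀ ^ 2 - 1)‖ ≤ max ‖b ^ 2 - 1‖ ‖x₀ ^ 2 - 1‖ :=
            Padic.nonarchimedean _ _
        _ < 1 := by rw [hbsq, hxsq]; exact max_lt hb hx0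
    rw [heq, Padic.add_eq_max_of_ne (by rw [h2]; exact ne_of_lt hsmall)]
    rw [h2]; exact max_eq_right (le_of_lt hsmall)
  have hdne : b ^ 2 + x₀ ^ 2 ≠ 0 := by
    intro h; rw [h] at hden; simp at hden
  have hkey : (x₀ - a) * (b ^ 2 + x₀ ^ 2) = a * ((b ^ 2 - 1) * (x₀ ^ 2 - 1)) := by
    field_simp at hfix0
    linear_combination -hfix0
  have hmain : ‖x₀ - a‖ = ‖x₀ - 1‖ * ‖b - 1‖ := by
    have := congrArg (fun z => ‖z‖) hkey
    simp only [norm_mul] at this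
    rw [hden, mul_one, haone, one_mul, hbsq, hxsq] at this
    rw [this, mul_comm]
  refine ⟨hmain, fun hbne => ?_⟩
  have : 0 < ‖b - 1‖ := by
    simp [norm_pos_iff, sub_ne_zero, hbne]
  calc ‖x₀ - a‖ = ‖x₀ - 1‖ * ‖b - 1‖ := hmain
    _ < 1 * ‖b - 1‖ := by exact mul_lt_mul_of_pos_right hx0 this
    _ = ‖b - 1‖ := one_mul _
end

section
/- Let p ≥ 3 be prime, a, b ∈ E_p with b ≠ 1, and let x₁ ∈ ℚ_p be a fixed point of g(u) = a(b²u² + 1)/(b² + u²) not lying in E_p. Then |x₁² + b²|_p = |b − 1|_p. -/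
private lemma stmt10_aux {p : ℕ} [Fact p.Prime] (x y : ℚ_[p]) (h : ‖x - y‖ < ‖y‖) :
    ‖x‖ = ‖y‖ := by
  have hx : x = (x - y) + y := by ring
  rw [hx, Padic.add_eq_max_of_ne (ne_of_lt h), max_eq_right h.le]

theorem stmt10 (p : ℕ) [Fact p.Prime] (hp : 3 ≤ p) (a b : ℚ_[p])
    (ha : ‖a - 1‖ < 1) (hb : ‖b - 1‖ < 1) (hb1 : b ≠ 1) (x₁ : ℚ_[p])
    (hd : b ^ 2 + x₁ ^ 2 ≠ 0)
    (hfix1 : a * (b ^ 2 * x₁ ^ 2 + 1) / (b ^ 2 + x₁ ^ 2) = x₁)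
    (hnotE : ¬ ‖x₁ - 1‖ < 1) :
    ‖x₁ ^ 2 + b ^ 2‖ = ‖b - 1‖ := by
  have hna : ‖a‖ = 1 := by
    have := stmt10_aux a 1 (by simpa using ha); simpa using this
  have hnb : ‖b‖ = 1 := by
    have := stmt10_aux b 1 (by simpa using hb); simpa using this
  have h2 : ‖(2 : ℚ_[p])‖ = 1 := by
    have hle : ‖((2 : ℤ) : ℚ_[p])‖ ≤ 1 := Padic.norm_int_le_one 2
    have hlt : ¬ ‖((2 : ℤ) : ℚ_[p])‖ < 1 := by
      rw [Padic.norm_intCast_lt_one_iff]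
      intro hdvd
      have := Int.le_of_dvd (by norm_num) hdvd
      omega
    have : ‖((2 : ℤ) : ℚ_[p])‖ = 1 := le_antisymm hle (not_lt.mp hlt)
    simpa using this
  have hbp1 : ‖b + 1‖ = 1 := by
    have h' : ‖(b + 1) - 2‖ < ‖(2 : ℚ_[p])‖ := by
      rw [h2]
      have : (b + 1) - 2 = b - 1 := by ring
      rw [this]; exact hb
    rw [stmt10_aux _ _ h', h2]
  have key : a * (b ^ 2 * x₁ ^ 2 + 1) = x₁ * (b ^ 2 + x₁ ^ 2) := by
    field_simp at hfix1
    linear_combination hfix1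
  have hxle : ‖x₁‖ ≤ 1 := by
    by_contra hgt
    push_neg at hgt
    have h0 : (0:ℝ) < ‖x₁‖ := lt_trans one_pos hgt
    have h13 : ‖x₁‖ < ‖x₁‖ ^ 3 := by
      nlinarith [mul_pos (mul_pos h0 (sub_pos.mpr hgt)) (by linarith : (0:ℝ) < ‖x₁‖ + 1)]
    have h23 : ‖x₁‖ ^ 2 < ‖x₁‖ ^ 3 := by
      nlinarith [mul_pos (mul_pos h0 h0) (sub_pos.mpr hgt)]
    have hrw : x₁ * (b ^ 2 + x₁ ^ 2) = x₁ ^ 3 + b ^ 2 * x₁ := by ring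
    have hn3 : ‖x₁ ^ 3‖ = ‖x₁‖ ^ 3 := by simp [norm_pow]
    have hnb2 : ‖b ^ 2 * x₁‖ = ‖x₁‖ := by simp [norm_mul, norm_pow, hnb]
    have hne : ‖x₁ ^ 3‖ ≠ ‖b ^ 2 * x₁‖ := by
      rw [hn3, hnb2]
      exact (ne_of_lt h13).symm
    have hL : ‖x₁ * (b ^ 2 + x₁ ^ 2)‖ = ‖x₁‖ ^ 3 := by
      rw [hrw, Padic.add_eq_max_of_ne hne, hn3, hnb2]
      exact max_eq_left h13.le
    have hR : ‖a * (b ^ 2 * x₁ ^ 2 + 1)‖ ≤ ‖x₁‖ ^ 2 := by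
      rw [norm_mul, hna, one_mul]
      calc ‖b ^ 2 * x₁ ^ 2 + 1‖ ≤ max ‖b ^ 2 * x₁ ^ 2‖ ‖(1 : ℚ_[p])‖ :=
            Padic.nonarchimedean _ _
        _ ≤ ‖x₁‖ ^ 2 := by
            apply max_le
            · simp [norm_mul, norm_pow, hnb]
            · simp; nlinarith
    rw [key, hL] at hR
    linarith
  have hx1 : ‖x₁ - 1‖ = 1 := by
    refine le_antisymm ?_ (not_lt.mp hnotE)
    calc ‖x₁ - 1‖ ≤ max ‖x₁‖ ‖(-1 : ℚ_[p])‖ := by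
          simpa [sub_eq_add_neg] using Padic.nonarchimedean x₁ (-1)
      _ ≤ 1 := by simp [hxle]
  have hxp1le : ‖x₁ + 1‖ ≤ 1 := by
    calc ‖x₁ + 1‖ ≤ max ‖x₁‖ ‖(1 : ℚ_[p])‖ := Padic.nonarchimedean _ _
      _ ≤ 1 := by simp [hxle]
  have hxa : ‖x₁ - a‖ = 1 := by
    have h' : ‖(x₁ - a) - (x₁ - 1)‖ < ‖x₁ - 1‖ := by
      rw [hx1]
      have : (x₁ - a) - (x₁ - 1) = -(a - 1) := by ring
      rw [this, norm_neg]; exact ha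
    rw [stmt10_aux _ _ h', hx1]
  have iden : (x₁ - a) * (x₁ ^ 2 + b ^ 2) =
      a * ((b - 1) * (b + 1)) * ((x₁ - 1) * (x₁ + 1)) := by
    linear_combination -key
  have hnorm : ‖x₁ ^ 2 + b ^ 2‖ = ‖b - 1‖ * ‖x₁ + 1‖ := by
    have hn := congrArg norm iden
    rw [norm_mul, norm_mul, norm_mul, norm_mul, norm_mul, hxa, hna, hx1, hbp1] at hn
    simpa using hn
  rcases lt_or_eq_of_le hxp1le with hlt | heq
  · exfalso
    have hone : ‖x₁ ^ 2 + b ^ 2‖ = 1 := by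
      have h' : ‖(x₁ ^ 2 + b ^ 2) - 2‖ < ‖(2 : ℚ_[p])‖ := by
        rw [h2]
        have hrw : (x₁ ^ 2 + b ^ 2) - 2 = (x₁ - 1) * (x₁ + 1) + (b - 1) * (b + 1) := by ring
        rw [hrw]
        calc ‖(x₁ - 1) * (x₁ + 1) + (b - 1) * (b + 1)‖
            ≤ max ‖(x₁ - 1) * (x₁ + 1)‖ ‖(b - 1) * (b + 1)‖ := Padic.nonarchimedean _ _
          _ < 1 := by
              apply max_lt
              · rw [norm_mul, hx1, one_mul]; exact hlt
              · rw [norm_mul, hbp1, mul_one]; exact hb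
      rw [stmt10_aux _ _ h', h2]
    rw [hone] at hnorm
    nlinarith [norm_nonneg (b - 1), norm_nonneg (x₁ + 1)]
  · rw [hnorm, heq, mul_one]
end

section
/- Let p ≥ 3 be prime, a, b ∈ E_p with b ≠ 1 and |a − 1|_p < |b − 1|_p, and x₀ ∈ E_p the fixed point of g(u) = a(b²u² + 1)/(b² + u²). Then |x₀ − 1|_p < |b − 1|_p. -/
theorem stmt12 (p : ℕ) [Fact p.Prime] (hp : 3 ≤ p) (a b : ℚ_[p])
    (ha : ‖a - 1‖ < 1) (hb : ‖b - 1‖ < 1) (hb1 : b ≠ 1)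
    (hab : ‖a - 1‖ < ‖b - 1‖) (x₀ : ℚ_[p]) (hx0 : ‖x₀ - 1‖ < 1)
    (hfix0 : a * (b ^ 2 * x₀ ^ 2 + 1) / (b ^ 2 + x₀ ^ 2) = x₀) :
    ‖x₀ - 1‖ < ‖b - 1‖ := by
  have hβpos : 0 < ‖b - 1‖ := by
    simpa [norm_pos_iff, sub_eq_zero] using hb1
  have hprime := (Fact.out : p.Prime)
  have h2 : ‖(2 : ℚ_[p])‖ = 1 := by
    have : ¬ ((p : ℤ) ∣ 2) := by
      intro h
      have := Int.le_of_dvd (by norm_num) h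
      omega
    have hle := Padic.norm_int_le_one (p := p) 2
    have hlt := (Padic.norm_intCast_lt_one_iff (p := p) (k := 2)).not.mpr this
    push_cast at hle hlt
    exact le_antisymm hle (not_lt.mp hlt)
  have hbp1 : ‖b + 1‖ = 1 := by
    have : b + 1 = (b - 1) + 2 := by ring
    rw [this, Padic.add_eq_max_of_ne (by rw [h2]; exact hb.ne), h2,
      max_eq_right hb.le]
  have hxp1 : ‖x₀ + 1‖ = 1 := by
    have : x₀ + 1 = (x₀ - 1) + 2 := by ring
    rw [this, Padic.add_eq_max_of_ne (by rw [h2]; exact hx0.ne), h2,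
      max_eq_right hx0.le]
  have hb2 : ‖b ^ 2 - 1‖ = ‖b - 1‖ := by
    have : b ^ 2 - 1 = (b - 1) * (b + 1) := by ring
    rw [this, norm_mul, hbp1, mul_one]
  have hx2 : ‖x₀ ^ 2 - 1‖ = ‖x₀ - 1‖ := by
    have : x₀ ^ 2 - 1 = (x₀ - 1) * (x₀ + 1) := by ring
    rw [this, norm_mul, hxp1, mul_one]
  have ha1 : ‖a‖ = 1 := by
    have : a = (a - 1) + 1 := by ring
    rw [this, Padic.add_eq_max_of_ne (by simpa using ha.ne), norm_one,
      max_eq_right ha.le]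
  have hden : ‖b ^ 2 + x₀ ^ 2‖ = 1 := by
    have heq : b ^ 2 + x₀ ^ 2 = ((b ^ 2 - 1) + (x₀ ^ 2 - 1)) + 2 := by ring
    have hsmall : ‖(b ^ 2 - 1) + (x₀ ^ 2 - 1)‖ < 1 := by
      calc ‖(b ^ 2 - 1) + (x₀ ^ 2 - 1)‖ ≤ max ‖b ^ 2 - 1‖ ‖x₀ ^ 2 - 1‖ :=
            Padic.nonarchimedean _ _
        _ < 1 := by rw [hb2, hx2]; exact max_lt hb hx0
    rw [heq, Padic.add_eq_max_of_ne (by rw [h2]; exact hsmall.ne), h2,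
      max_eq_right hsmall.le]
  have hdne : b ^ 2 + x₀ ^ 2 ≠ 0 := by
    intro h; rw [h] at hden; simp at hden
  have hfix : a * (b ^ 2 * x₀ ^ 2 + 1) = x₀ * (b ^ 2 + x₀ ^ 2) := by
    field_simp at hfix0; linear_combination hfix0
  have key : (x₀ - 1) * (b ^ 2 + x₀ ^ 2)
      = a * (b ^ 2 - 1) * (x₀ ^ 2 - 1) + (a - 1) * (x₀ ^ 2 - 1)
        + (a - 1) * (b ^ 2 - 1) + 2 * (a - 1) := by
    linear_combination -hfix
  have hnorm : ‖x₀ - 1‖ = ‖(x₀ - 1) * (b ^ 2 + x₀ ^ 2)‖ := by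
    rw [norm_mul, hden, mul_one]
  rw [hnorm, key]
  have t1 : ‖a * (b ^ 2 - 1) * (x₀ ^ 2 - 1)‖ < ‖b - 1‖ := by
    rw [norm_mul, norm_mul, ha1, one_mul, hb2, hx2]
    calc ‖b - 1‖ * ‖x₀ - 1‖ < ‖b - 1‖ * 1 :=
          mul_lt_mul_of_pos_left hx0 hβpos
      _ = ‖b - 1‖ := mul_one _
  have t2 : ‖(a - 1) * (x₀ ^ 2 - 1)‖ < ‖b - 1‖ := by
    rw [norm_mul, hx2]
    calc ‖a - 1‖ * ‖x₀ - 1‖ ≤ ‖a - 1‖ * 1 := by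
          exact mul_le_mul_of_nonneg_left hx0.le (norm_nonneg _)
      _ = ‖a - 1‖ := mul_one _
      _ < ‖b - 1‖ := hab
  have t3 : ‖(a - 1) * (b ^ 2 - 1)‖ < ‖b - 1‖ := by
    rw [norm_mul, hb2]
    calc ‖a - 1‖ * ‖b - 1‖ < 1 * ‖b - 1‖ := mul_lt_mul_of_pos_right ha hβpos
      _ = ‖b - 1‖ := one_mul _
  have t4 : ‖(2 : ℚ_[p]) * (a - 1)‖ < ‖b - 1‖ := by
    rw [norm_mul, h2, one_mul]; exact hab
  calc ‖a * (b ^ 2 - 1) * (x₀ ^ 2 - 1) + (a - 1) * (x₀ ^ 2 - 1)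
        + (a - 1) * (b ^ 2 - 1) + 2 * (a - 1)‖
      ≤ max (max (max ‖a * (b ^ 2 - 1) * (x₀ ^ 2 - 1)‖ ‖(a - 1) * (x₀ ^ 2 - 1)‖)
          ‖(a - 1) * (b ^ 2 - 1)‖) ‖2 * (a - 1)‖ := by
        refine le_trans (Padic.nonarchimedean _ _) ?_
        refine max_le_max (le_trans (Padic.nonarchimedean _ _) ?_) le_rfl
        exact max_le_max (Padic.nonarchimedean _ _) le_rfl
    _ < ‖b - 1‖ := by
        exact max_lt (max_lt (max_lt t1 t2) t3) t4
end

section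
/- Let p ≥ 3 be prime, a, b ∈ E_p with b ≠ 1, and x₀ ∈ E_p the fixed point of g(u) = a(b²u² + 1)/(b² + u²). Then |g'(x₀)|_p = |b⁴ − 1|_p ≤ 1/p; i.e., x₀ is an attracting fixed point. -/
lemma stmt13_norm_eq {p : ℕ} [Fact p.Prime] {x z : ℚ_[p]} (h : ‖x - z‖ < ‖z‖) : ‖x‖ = ‖z‖ := by
  have hne : ‖x - z‖ ≠ ‖z‖ := ne_of_lt h
  have h2 := Padic.add_eq_max_of_ne hne
  simpa [max_eq_right (le_of_lt h)] using h2

lemma stmt13_two {p : ℕ} [Fact p.Prime] (hp : 3 ≤ p) : ‖(2 : ℚ_[p])‖ = 1 := by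
  have hle : ‖((2:ℤ) : ℚ_[p])‖ ≤ 1 := Padic.norm_int_le_one 2
  have : ¬ ((p:ℤ) ∣ 2) := by
    intro h; have := Int.le_of_dvd (by norm_num) h; omega
  have hlt := (Padic.norm_intCast_lt_one_iff (p := p) (k := 2)).not.mpr this
  push_neg at hlt
  have := le_antisymm hle hlt
  simpa using this

theorem stmt13 (p : ℕ) [Fact p.Prime] (hp : 3 ≤ p) (a b : ℚ_[p])
    (ha : ‖a - 1‖ < 1) (hb : ‖b - 1‖ < 1) (hb1 : b ≠ 1) (x₀ : ℚ_[p])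
    (hx0 : ‖x₀ - 1‖ < 1)
    (hfix0 : a * (b ^ 2 * x₀ ^ 2 + 1) / (b ^ 2 + x₀ ^ 2) = x₀) :
    ‖deriv (fun u : ℚ_[p] => a * (b ^ 2 * u ^ 2 + 1) / (b ^ 2 + u ^ 2)) x₀‖
      = ‖b ^ 4 - 1‖ ∧ ‖b ^ 4 - 1‖ ≤ (p : ℝ)⁻¹ := by
  have h1 : ‖(1:ℚ_[p])‖ = 1 := norm_one
  have hna : ‖a‖ = 1 := by simpa [h1] using stmt13_norm_eq (z := (1:ℚ_[p])) (by simpa [h1] using ha)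
  have hnb : ‖b‖ = 1 := by simpa [h1] using stmt13_norm_eq (z := (1:ℚ_[p])) (by simpa [h1] using hb)
  have hnx : ‖x₀‖ = 1 := by simpa [h1] using stmt13_norm_eq (z := (1:ℚ_[p])) (by simpa [h1] using hx0)
  have h2 : ‖(2:ℚ_[p])‖ = 1 := stmt13_two hp
  -- ‖b^2 - 1‖ < 1 and ‖x₀^2 - 1‖ < 1
  have hsq : ∀ y : ℚ_[p], ‖y‖ = 1 → ‖y - 1‖ < 1 → ‖y ^ 2 - 1‖ < 1 := by
    intro y hy hylt
    have : y ^ 2 - 1 = (y - 1) * (y + 1) := by ring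
    rw [this, norm_mul]
    have h3 : ‖y + 1‖ ≤ 1 := le_trans (Padic.nonarchimedean _ _) (by simp [hy])
    calc ‖y - 1‖ * ‖y + 1‖ ≤ ‖y - 1‖ * 1 := by
          exact mul_le_mul_of_nonneg_left h3 (norm_nonneg _)
      _ = ‖y - 1‖ := by ring
      _ < 1 := hylt
  -- norm of denominator is 1
  have hDnorm : ‖b ^ 2 + x₀ ^ 2‖ = 1 := by
    have hdiff : ‖(b ^ 2 + x₀ ^ 2) - 2‖ < 1 := by
      have : (b ^ 2 + x₀ ^ 2) - 2 = (b ^ 2 - 1) + (x₀ ^ 2 - 1) := by ring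
      rw [this]
      exact lt_of_le_of_lt (Padic.nonarchimedean _ _)
        (max_lt (hsq b hnb hb) (hsq x₀ hnx hx0))
    have := stmt13_norm_eq (z := (2:ℚ_[p])) (by rwa [h2])
    rwa [h2] at this
  have hDne : b ^ 2 + x₀ ^ 2 ≠ 0 := by
    intro h; rw [h] at hDnorm; simp at hDnorm
  -- derivative
  have hN : HasDerivAt (fun u : ℚ_[p] => a * (b ^ 2 * u ^ 2 + 1))
      (a * (b ^ 2 * (2 * x₀))) x₀ := by
    have := (((hasDerivAt_pow 2 x₀).const_mul (b ^ 2)).add_const 1).const_mul a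
    simpa [mul_comm, mul_assoc, mul_left_comm] using this
  have hD : HasDerivAt (fun u : ℚ_[p] => b ^ 2 + u ^ 2) (2 * x₀) x₀ := by
    have := (hasDerivAt_pow 2 x₀).const_add (b ^ 2)
    simpa using this
  have hder := (hN.div hD hDne).deriv
  have hval : deriv (fun u : ℚ_[p] => a * (b ^ 2 * u ^ 2 + 1) / (b ^ 2 + u ^ 2)) x₀
      = 2 * a * x₀ * (b ^ 4 - 1) / (b ^ 2 + x₀ ^ 2) ^ 2 := by
    change deriv ((fun u : ℚ_[p] => a * (b ^ 2 * u ^ 2 + 1)) / fun u => b ^ 2 + u ^ 2) x₀ = _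
    rw [hder]; field_simp; ring
  have hnorm1 : ‖deriv (fun u : ℚ_[p] => a * (b ^ 2 * u ^ 2 + 1) / (b ^ 2 + u ^ 2)) x₀‖
      = ‖b ^ 4 - 1‖ := by
    rw [hval, norm_div, norm_pow, hDnorm]
    rw [norm_mul, norm_mul, norm_mul, h2, hna, hnx]
    ring
  refine ⟨hnorm1, ?_⟩
  -- second part
  have hfac : b ^ 4 - 1 = (b - 1) * (b ^ 3 + b ^ 2 + b + 1) := by ring
  have hcof : ‖b ^ 3 + b ^ 2 + b + 1‖ ≤ 1 := by
    refine le_trans (Padic.nonarchimedean _ _) (max_le ?_ (by simp))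
    refine le_trans (Padic.nonarchimedean _ _) (max_le ?_ (by simp [hnb]))
    refine le_trans (Padic.nonarchimedean _ _) (max_le ?_ ?_) <;> simp [hnb]
  have hle : ‖b ^ 4 - 1‖ ≤ ‖b - 1‖ := by
    rw [hfac, norm_mul]
    calc ‖b - 1‖ * ‖b ^ 3 + b ^ 2 + b + 1‖ ≤ ‖b - 1‖ * 1 :=
          mul_le_mul_of_nonneg_left hcof (norm_nonneg _)
      _ = ‖b - 1‖ := mul_one _
  have hbp : ‖b - 1‖ ≤ (p : ℝ)⁻¹ := by
    have := (Padic.norm_le_pow_iff_norm_lt_pow_add_one (b - 1) (-1)).mpr (by simpa using hb)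
    simpa [zpow_neg, zpow_one] using this
  exact le_trans hle hbp
end

section
/- Let p ≥ 3 be prime, a, b ∈ E_p with b ≠ 1, and let x₁ ∈ ℚ_p be a fixed point of g(u) = a(b²u² + 1)/(b² + u²) with x₁ ∉ E_p. Then |g'(x₁)|_p = 1/|b − 1|_p ≥ p; i.e., x₁ is a repelling fixed point. -/
-- ultrametric: dominant term wins
private lemma dom {p : ℕ} [Fact p.Prime] {z w : ℚ_[p]} (h : ‖z‖ < ‖w‖) :
    ‖z + w‖ = ‖w‖ := by
  rw [Padic.add_eq_max_of_ne (ne_of_lt h), max_eq_right h.le]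

set_option maxHeartbeats 1000000 in
theorem stmt14 (p : ℕ) [Fact p.Prime] (hp : 3 ≤ p) (a b : ℚ_[p])
    (ha : ‖a - 1‖ < 1) (hb : ‖b - 1‖ < 1) (hb1 : b ≠ 1) (x₁ : ℚ_[p])
    (hd : b ^ 2 + x₁ ^ 2 ≠ 0)
    (hfix1 : a * (b ^ 2 * x₁ ^ 2 + 1) / (b ^ 2 + x₁ ^ 2) = x₁)
    (hnotE : ¬ ‖x₁ - 1‖ < 1) :
    ‖deriv (fun u : ℚ_[p] => a * (b ^ 2 * u ^ 2 + 1) / (b ^ 2 + u ^ 2)) x₁‖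
      = ‖b - 1‖⁻¹ ∧
    (p : ℝ) ≤ ‖deriv (fun u : ℚ_[p] => a * (b ^ 2 * u ^ 2 + 1) / (b ^ 2 + u ^ 2)) x₁‖ := by
  -- basic norms
  have hone : ‖(1:ℚ_[p])‖ = 1 := norm_one
  have hanorm : ‖a‖ = 1 := by
    have : ‖(a - 1) + 1‖ = 1 := by rw [dom (by simpa using ha)]; exact norm_one
    simpa using this
  have hbnorm : ‖b‖ = 1 := by
    have : ‖(b - 1) + 1‖ = 1 := by rw [dom (by simpa using hb)]; exact norm_one
    simpa using this
  have h2 : ‖(2:ℚ_[p])‖ = 1 := by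
    refine le_antisymm (by simpa using Padic.norm_int_le_one (p := p) 2) ?_
    by_contra hlt
    push_neg at hlt
    have : (p:ℤ) ∣ 2 := by
      have := (Padic.norm_intCast_lt_one_iff (p := p) (k := 2)).mp (by simpa using hlt)
      simpa using this
    have := Int.le_of_dvd (by norm_num) this
    omega
  have hbp1 : ‖b + 1‖ = 1 := by
    have : ‖(b - 1) + 2‖ = 1 := by rw [dom (by rw [h2]; exact hb)]; exact h2
    have e : (b - 1) + 2 = b + 1 := by ring
    rwa [e] at this
  have hb21 : ‖b ^ 2 - 1‖ = ‖b - 1‖ := by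
    have e : b ^ 2 - 1 = (b - 1) * (b + 1) := by ring
    rw [e, norm_mul, hbp1, mul_one]
  have hb2p1 : ‖b ^ 2 + 1‖ = 1 := by
    have : ‖(b ^ 2 - 1) + 2‖ = 1 := by rw [dom (by rw [h2, hb21]; exact hb)]; exact h2
    have e : (b ^ 2 - 1) + 2 = b ^ 2 + 1 := by ring
    rwa [e] at this
  have hb41 : ‖b ^ 4 - 1‖ = ‖b - 1‖ := by
    have e : b ^ 4 - 1 = (b ^ 2 - 1) * (b ^ 2 + 1) := by ring
    rw [e, norm_mul, hb2p1, mul_one, hb21]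
  -- the fixed point equation cleared of denominators
  have hfix : a * (b ^ 2 * x₁ ^ 2 + 1) = x₁ * (b ^ 2 + x₁ ^ 2) := by
    field_simp at hfix1
    linear_combination hfix1
  -- ‖x₁‖ = 1
  have hx1 : ‖x₁‖ = 1 := by
    have hnum : ‖a * (b ^ 2 * x₁ ^ 2 + 1)‖ = ‖x₁‖ * ‖b ^ 2 + x₁ ^ 2‖ := by
      rw [hfix]; rw [norm_mul]
    rcases lt_trichotomy ‖x₁‖ 1 with h | h | h
    · exfalso
      have hx2 : ‖x₁ ^ 2‖ < 1 := by
        rw [norm_pow]; exact pow_lt_one₀ (norm_nonneg _) h (by norm_num)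
      have hden : ‖b ^ 2 + x₁ ^ 2‖ = 1 := by
        have h' : ‖x₁ ^ 2 + b ^ 2‖ = ‖b ^ 2‖ := by
          apply dom
          simp only [norm_pow, hbnorm, one_pow]
          simpa [norm_pow] using hx2
        rw [add_comm] at h'; rw [h', norm_pow, hbnorm]; norm_num
      have hN : ‖b ^ 2 * x₁ ^ 2 + 1‖ = 1 := by
        have h' : ‖b ^ 2 * x₁ ^ 2 + 1‖ = ‖(1:ℚ_[p])‖ := by
          apply dom
          simp only [norm_mul, norm_pow, hbnorm, one_pow, one_mul, norm_one]
          simpa [norm_pow] using hx2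
        rw [h', norm_one]
      rw [norm_mul, hanorm, hN, hden, mul_one] at hnum
      simp at hnum
      linarith
    · exact h
    · exfalso
      have hx2 : (1:ℝ) < ‖x₁ ^ 2‖ := by
        rw [norm_pow]; exact one_lt_pow₀ h (by norm_num)
      have hden : ‖b ^ 2 + x₁ ^ 2‖ = ‖x₁‖ ^ 2 := by
        have h' : ‖b ^ 2 + x₁ ^ 2‖ = ‖x₁ ^ 2‖ := by
          apply dom
          simp only [norm_pow, hbnorm, one_pow]
          simpa [norm_pow] using hx2
        rw [h', norm_pow]
      have hN : ‖b ^ 2 * x₁ ^ 2 + 1‖ = ‖x₁‖ ^ 2 := by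
        have : ‖(1:ℚ_[p]) + b ^ 2 * x₁ ^ 2‖ = ‖b ^ 2 * x₁ ^ 2‖ := by
          apply dom; rw [norm_one, norm_mul, norm_pow, hbnorm, one_pow, one_mul]; linarith
        rw [add_comm] at this
        rw [this, norm_mul, norm_pow, norm_pow, hbnorm, one_pow, one_mul]
      rw [norm_mul, hanorm, hN, hden, one_mul] at hnum
      have : ‖x₁‖ = 1 := by
        have h0 : (0:ℝ) < ‖x₁‖ ^ 2 := by positivity
        field_simp at hnum
        nlinarith
      linarith
  -- ‖x₁ - 1‖ = 1
  have hX1 : ‖x₁ - 1‖ = 1 := by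
    refine le_antisymm ?_ (not_lt.mp hnotE)
    have h' : ‖x₁ - 1‖ ≤ max ‖x₁‖ ‖(-1 : ℚ_[p])‖ := by
      simpa [sub_eq_add_neg] using Padic.nonarchimedean x₁ (-1)
    simpa [hx1] using h'
  -- ‖a - x₁‖ = 1
  have hax : ‖a - x₁‖ = 1 := by
    have e : a - x₁ = (a - 1) + -(x₁ - 1) := by ring
    rw [e, dom (by rw [norm_neg, hX1]; exact ha), norm_neg, hX1]
  -- key identity
  have hkey : (a - x₁) * (b ^ 2 + x₁ ^ 2) = -(a * ((b ^ 2 - 1) * (x₁ ^ 2 - 1))) := by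
    linear_combination hfix
  have hkeyn : ‖b ^ 2 + x₁ ^ 2‖ = ‖b - 1‖ * ‖x₁ ^ 2 - 1‖ := by
    have := congrArg norm hkey
    rw [norm_mul, norm_neg, norm_mul, norm_mul, hax, one_mul, hanorm, one_mul, hb21] at this
    exact this
  have hxx : ‖x₁ ^ 2 - 1‖ = 1 := by
    by_contra hne
    have hle : ‖x₁ ^ 2 - 1‖ ≤ 1 := by
      have h' := Padic.nonarchimedean (x₁ ^ 2) (-1)
      simp only [norm_pow, norm_neg, norm_one, hx1, one_pow, max_self, sub_eq_add_neg] at h' ⊢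
      exact h'
    have hlt : ‖x₁ ^ 2 - 1‖ < 1 := lt_of_le_of_ne hle hne
    have e : (x₁ ^ 2 - 1) + (b ^ 2 + 1) = b ^ 2 + x₁ ^ 2 := by ring
    have : ‖b ^ 2 + x₁ ^ 2‖ = 1 := by
      rw [← e, dom (by rw [hb2p1]; exact hlt), hb2p1]
    rw [hkeyn] at this
    nlinarith [norm_nonneg (b - 1), norm_nonneg (x₁ ^ 2 - 1)]
  have hden : ‖b ^ 2 + x₁ ^ 2‖ = ‖b - 1‖ := by rw [hkeyn, hxx, mul_one]
  -- compute the derivative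
  have h0 : HasDerivAt (fun u : ℚ_[p] => u ^ 2) (2 * x₁) x₁ := by
    simpa using hasDerivAt_pow 2 x₁
  have hN : HasDerivAt (fun u : ℚ_[p] => a * (b ^ 2 * u ^ 2 + 1)) (a * (b ^ 2 * (2 * x₁))) x₁ :=
    ((h0.const_mul (b ^ 2)).add_const 1).const_mul a
  have hD : HasDerivAt (fun u : ℚ_[p] => b ^ 2 + u ^ 2) (2 * x₁) x₁ := h0.const_add _
  have hq := hN.div hD hd
  have hderiv : deriv (fun u : ℚ_[p] => a * (b ^ 2 * u ^ 2 + 1) / (b ^ 2 + u ^ 2)) x₁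
      = 2 * a * x₁ * (b ^ 4 - 1) / (b ^ 2 + x₁ ^ 2) ^ 2 := by
    rw [show (fun u : ℚ_[p] => a * (b ^ 2 * u ^ 2 + 1) / (b ^ 2 + u ^ 2)) = ((fun u => a * (b ^ 2 * u ^ 2 + 1)) / fun u => b ^ 2 + u ^ 2) from rfl, hq.deriv]
    congr 1
    ring
  have hbne : ‖b - 1‖ ≠ 0 := by
    simpa [sub_eq_zero] using hb1
  have hbpos : (0:ℝ) < ‖b - 1‖ := lt_of_le_of_ne (norm_nonneg _) (Ne.symm hbne)
  have hmain : ‖deriv (fun u : ℚ_[p] => a * (b ^ 2 * u ^ 2 + 1) / (b ^ 2 + u ^ 2)) x₁‖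
      = ‖b - 1‖⁻¹ := by
    rw [hderiv, norm_div, norm_mul, norm_mul, norm_mul, norm_pow, h2, hanorm, hx1, hb41, hden]
    field_simp
  refine ⟨hmain, ?_⟩
  rw [hmain]
  -- ‖b-1‖ ≤ p⁻¹
  have hple : ‖b - 1‖ ≤ (p:ℝ)⁻¹ := by
    have hb0 : b - 1 ≠ 0 := sub_ne_zero.mpr hb1
    rw [Padic.norm_eq_zpow_neg_valuation hb0] at hb ⊢
    have hp1 : (1:ℝ) < (p:ℝ) := by
      have := (Fact.out : p.Prime).one_lt
      exact_mod_cast this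
    have hv : 0 < (b - 1).valuation := by
      by_contra hv
      push_neg at hv
      have : (1:ℝ) ≤ (p:ℝ) ^ (-(b - 1).valuation) :=
        one_le_zpow₀ hp1.le (by omega)
      linarith
    calc ((p:ℝ)) ^ (-(b - 1).valuation) ≤ (p:ℝ) ^ (-1 : ℤ) :=
          zpow_le_zpow_right₀ hp1.le (by omega)
    _ = (p:ℝ)⁻¹ := by simp
  have h' := inv_anti₀ hbpos hple
  rwa [inv_inv] at h'
end

section
/- Let p ≥ 3 be prime, a, b ∈ E_p with b ≠ 1, and g(u) = a(b²u² + 1)/(b² + u²). If x ∈ ℚ_p satisfies |x² + 1|_p > |b² − 1|_p (with x² + b² ≠ 0), then |g(x) − 1|_p < 1, i.e., g(x) ∈ E_p. -/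
theorem stmt15 (p : ℕ) [Fact p.Prime] (hp : 3 ≤ p) (a b : ℚ_[p])
    (ha : ‖a - 1‖ < 1) (hb : ‖b - 1‖ < 1) (hb1 : b ≠ 1) (x : ℚ_[p])
    (hx : ‖x ^ 2 + 1‖ > ‖b ^ 2 - 1‖) (hd : x ^ 2 + b ^ 2 ≠ 0) :
    ‖a * (b ^ 2 * x ^ 2 + 1) / (b ^ 2 + x ^ 2) - 1‖ < 1 := by
  have hx1pos : (0:ℝ) < ‖x ^ 2 + 1‖ := lt_of_le_of_lt (norm_nonneg _) hx
  have hbn : ‖b‖ ≤ 1 := by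
    calc ‖b‖ = ‖(b - 1) + 1‖ := by ring_nf
    _ ≤ max ‖b - 1‖ ‖(1:ℚ_[p])‖ := Padic.nonarchimedean _ _
    _ ≤ 1 := by simp [le_of_lt hb]
  have hbp1 : ‖b + 1‖ ≤ 1 := by
    calc ‖b + 1‖ = ‖(b - 1) + 2‖ := by ring_nf
    _ ≤ max ‖b - 1‖ ‖(2:ℚ_[p])‖ := Padic.nonarchimedean _ _
    _ ≤ 1 := by
        refine max_le (le_of_lt hb) ?_
        simpa using Padic.norm_int_le_one (p := p) 2
  have hb2 : ‖b ^ 2 - 1‖ < 1 := by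
    calc ‖b ^ 2 - 1‖ = ‖(b - 1) * (b + 1)‖ := by ring_nf
    _ = ‖b - 1‖ * ‖b + 1‖ := by simp [norm_mul]
    _ ≤ ‖b - 1‖ * 1 := by
        exact mul_le_mul_of_nonneg_left hbp1 (norm_nonneg _)
    _ < 1 := by simpa using hb
  have hab : ‖a * b ^ 2 - 1‖ < 1 := by
    calc ‖a * b ^ 2 - 1‖ = ‖(a - 1) * b ^ 2 + (b ^ 2 - 1)‖ := by ring_nf
    _ ≤ max ‖(a - 1) * b ^ 2‖ ‖b ^ 2 - 1‖ := Padic.nonarchimedean _ _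
    _ < 1 := by
        refine max_lt ?_ hb2
        calc ‖(a - 1) * b ^ 2‖ = ‖a - 1‖ * (‖b‖ * ‖b‖) := by
              simp [norm_mul, sq]
        _ ≤ ‖a - 1‖ * 1 := by
              refine mul_le_mul_of_nonneg_left ?_ (norm_nonneg _)
              exact mul_le_one₀ hbn (norm_nonneg _) hbn
        _ < 1 := by simpa using ha
  have hap1 : ‖a + 1‖ ≤ 1 := by
    calc ‖a + 1‖ = ‖(a - 1) + 2‖ := by ring_nf
    _ ≤ max ‖a - 1‖ ‖(2:ℚ_[p])‖ := Padic.nonarchimedean _ _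
    _ ≤ 1 := by
        refine max_le (le_of_lt ha) ?_
        simpa using Padic.norm_int_le_one (p := p) 2
  have hden : ‖b ^ 2 + x ^ 2‖ = ‖x ^ 2 + 1‖ := by
    have : b ^ 2 + x ^ 2 = (x ^ 2 + 1) + (b ^ 2 - 1) := by ring
    rw [this, Padic.add_eq_max_of_ne (ne_of_gt hx)]
    exact max_eq_left (le_of_lt hx)
  have hnum : ‖(a * b ^ 2 - 1) * (x ^ 2 + 1) - (a + 1) * (b ^ 2 - 1)‖ < ‖x ^ 2 + 1‖ := by
    have h1 : ‖(a * b ^ 2 - 1) * (x ^ 2 + 1)‖ < ‖x ^ 2 + 1‖ := by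
      rw [norm_mul]
      exact mul_lt_of_lt_one_left hx1pos hab
    have h2 : ‖(a + 1) * (b ^ 2 - 1)‖ < ‖x ^ 2 + 1‖ := by
      rw [norm_mul]
      calc ‖a + 1‖ * ‖b ^ 2 - 1‖ ≤ 1 * ‖b ^ 2 - 1‖ :=
            mul_le_mul_of_nonneg_right hap1 (norm_nonneg _)
      _ < ‖x ^ 2 + 1‖ := by simpa using hx
    calc ‖(a * b ^ 2 - 1) * (x ^ 2 + 1) - (a + 1) * (b ^ 2 - 1)‖
        = ‖(a * b ^ 2 - 1) * (x ^ 2 + 1) + (-((a + 1) * (b ^ 2 - 1)))‖ := by ring_nf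
    _ ≤ max ‖(a * b ^ 2 - 1) * (x ^ 2 + 1)‖ ‖-((a + 1) * (b ^ 2 - 1))‖ :=
        Padic.nonarchimedean _ _
    _ < ‖x ^ 2 + 1‖ := by
        rw [norm_neg]; exact max_lt h1 h2
  have hd' : b ^ 2 + x ^ 2 ≠ 0 := by rwa [add_comm] at hd
  have key : a * (b ^ 2 * x ^ 2 + 1) / (b ^ 2 + x ^ 2) - 1
      = ((a * b ^ 2 - 1) * (x ^ 2 + 1) - (a + 1) * (b ^ 2 - 1)) / (b ^ 2 + x ^ 2) := by
    field_simp
    ring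
  rw [key, norm_div, hden]
  exact (div_lt_one hx1pos).2 hnum
end

section
/- Let p ≥ 3 be prime, a, b ∈ E_p with b ≠ 1 and |a − 1|_p < |b − 1|_p, and suppose g(u) = a(b²u² + 1)/(b² + u²) has three fixed points x₀ ∈ E_p and x₁, x₂ ∉ E_p. Then |x₁ − x₂|_p = 1; in particular the balls B_r(x₁) and B_r(x₂) with r = |b − 1|_p are disjoint. -/
theorem stmt16 (p : ℕ) [Fact p.Prime] (hp : 3 ≤ p) (a b : ℚ_[p])
    (ha : ‖a - 1‖ < 1) (hb : ‖b - 1‖ < 1) (hb1 : b ≠ 1)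
    (hab : ‖a - 1‖ < ‖b - 1‖) (x₀ x₁ x₂ : ℚ_[p])
    (hx0 : ‖x₀ - 1‖ < 1)
    (hfix0 : a * (b ^ 2 * x₀ ^ 2 + 1) / (b ^ 2 + x₀ ^ 2) = x₀)
    (hd1 : b ^ 2 + x₁ ^ 2 ≠ 0) (hd2 : b ^ 2 + x₂ ^ 2 ≠ 0)
    (hfix1 : a * (b ^ 2 * x₁ ^ 2 + 1) / (b ^ 2 + x₁ ^ 2) = x₁)
    (hfix2 : a * (b ^ 2 * x₂ ^ 2 + 1) / (b ^ 2 + x₂ ^ 2) = x₂)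
    (h1 : ¬ ‖x₁ - 1‖ < 1) (h2 : ¬ ‖x₂ - 1‖ < 1) (hne : x₁ ≠ x₂) :
    ‖x₁ - x₂‖ = 1 ∧ Disjoint (Metric.ball x₁ ‖b - 1‖) (Metric.ball x₂ ‖b - 1‖) := by
  have hpprime := (Fact.out : p.Prime)
  -- basic norm facts
  have hone : ‖(1 : ℚ_[p])‖ = 1 := norm_one
  have hnorm_of_close : ∀ y : ℚ_[p], ‖y - 1‖ < 1 → ‖y‖ = 1 := by
    intro y hy
    have : y = 1 + (y - 1) := by ring
    rw [this, Padic.add_eq_max_of_ne (by rw [hone]; exact ne_of_gt hy)]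
    simp [le_of_lt hy]
  have hna : ‖a‖ = 1 := hnorm_of_close a ha
  have hnb : ‖b‖ = 1 := hnorm_of_close b hb
  have hnx0 : ‖x₀‖ = 1 := hnorm_of_close x₀ hx0
  have hx0ne : x₀ ≠ 0 := by intro h; rw [h] at hnx0; simp at hnx0
  -- x₀ ≠ x₁, x₀ ≠ x₂
  have hne01 : x₀ ≠ x₁ := by intro h; exact h1 (h ▸ hx0)
  have hne02 : x₀ ≠ x₂ := by intro h; exact h2 (h ▸ hx0)
  -- denominator at x₀ is nonzero: norm of b^2 + x₀^2 is 1 (since ‖2‖ = 1)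
  have h2norm : ‖(2 : ℚ_[p])‖ = 1 := by
    have hle : ‖(2 : ℚ_[p])‖ ≤ 1 := by
      have := Padic.norm_int_le_one (p := p) 2
      simpa using this
    rcases lt_or_eq_of_le hle with h | h
    · exfalso
      have := (Padic.norm_intCast_lt_one_iff (p := p) (k := 2)).mp (by simpa using h)
      have : (p : ℤ) ≤ 2 := Int.le_of_dvd (by norm_num) this
      omega
    · exact h
  have hsq_close : ∀ y : ℚ_[p], ‖y - 1‖ < 1 → ‖y ^ 2 - 1‖ < 1 := by
    intro y hy
    have : y ^ 2 - 1 = (y - 1) * (y + 1) := by ring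
    rw [this, Padic.padicNormE.mul]
    calc ‖y - 1‖ * ‖y + 1‖ ≤ ‖y - 1‖ * 1 := by
          apply mul_le_mul_of_nonneg_left _ (norm_nonneg _)
          calc ‖y + 1‖ ≤ max ‖y‖ ‖(1:ℚ_[p])‖ := Padic.nonarchimedean _ _
            _ ≤ 1 := by rw [hnorm_of_close y hy, hone]; simp
      _ = ‖y - 1‖ := mul_one _
      _ < 1 := hy
  have hd0 : b ^ 2 + x₀ ^ 2 ≠ 0 := by
    have heq : b ^ 2 + x₀ ^ 2 = 2 + ((b ^ 2 - 1) + (x₀ ^ 2 - 1)) := by ring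
    have hsmall : ‖(b ^ 2 - 1) + (x₀ ^ 2 - 1)‖ < 1 :=
      lt_of_le_of_lt (Padic.nonarchimedean _ _)
        (max_lt (hsq_close b hb) (hsq_close x₀ hx0))
    have : ‖b ^ 2 + x₀ ^ 2‖ = 1 := by
      rw [heq, Padic.add_eq_max_of_ne (by rw [h2norm]; exact ne_of_gt hsmall),
        h2norm]
      simp [le_of_lt hsmall]
    intro h; rw [h] at this; simp at this
  -- cleared fixed point equations
  have e0 : a * (b ^ 2 * x₀ ^ 2 + 1) = x₀ * (b ^ 2 + x₀ ^ 2) := by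
    rw [div_eq_iff hd0] at hfix0; exact hfix0
  have e1 : a * (b ^ 2 * x₁ ^ 2 + 1) = x₁ * (b ^ 2 + x₁ ^ 2) := by
    rw [div_eq_iff hd1] at hfix1; exact hfix1
  have e2 : a * (b ^ 2 * x₂ ^ 2 + 1) = x₂ * (b ^ 2 + x₂ ^ 2) := by
    rw [div_eq_iff hd2] at hfix2; exact hfix2
  -- Vieta-style relations
  have h01 : (x₀ - x₁) * (x₀ ^ 2 + x₀ * x₁ + x₁ ^ 2 - a * b ^ 2 * (x₀ + x₁) + b ^ 2) = 0 := by
    linear_combination e1 - e0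
  have h02 : (x₀ - x₂) * (x₀ ^ 2 + x₀ * x₂ + x₂ ^ 2 - a * b ^ 2 * (x₀ + x₂) + b ^ 2) = 0 := by
    linear_combination e2 - e0
  have h12 : (x₁ - x₂) * (x₁ ^ 2 + x₁ * x₂ + x₂ ^ 2 - a * b ^ 2 * (x₁ + x₂) + b ^ 2) = 0 := by
    linear_combination e2 - e1
  have hC01 : x₀ ^ 2 + x₀ * x₁ + x₁ ^ 2 - a * b ^ 2 * (x₀ + x₁) + b ^ 2 = 0 :=
    (mul_eq_zero.mp h01).resolve_left (sub_ne_zero.mpr hne01)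
  have hC02 : x₀ ^ 2 + x₀ * x₂ + x₂ ^ 2 - a * b ^ 2 * (x₀ + x₂) + b ^ 2 = 0 :=
    (mul_eq_zero.mp h02).resolve_left (sub_ne_zero.mpr hne02)
  have hC12 : x₁ ^ 2 + x₁ * x₂ + x₂ ^ 2 - a * b ^ 2 * (x₁ + x₂) + b ^ 2 = 0 :=
    (mul_eq_zero.mp h12).resolve_left (sub_ne_zero.mpr hne)
  have hsum' : (x₁ - x₂) * (x₀ + x₁ + x₂ - a * b ^ 2) = 0 := by
    linear_combination hC01 - hC02
  have hsum : x₁ + x₂ = a * b ^ 2 - x₀ := by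
    have := (mul_eq_zero.mp hsum').resolve_left (sub_ne_zero.mpr hne)
    linear_combination this
  have r0 : x₀ ^ 3 - a * b ^ 2 * x₀ ^ 2 + b ^ 2 * x₀ - a = 0 := by
    linear_combination -e0
  -- key identity
  have key : x₀ * (x₁ - x₂) ^ 2 = x₀ * (a * b ^ 2 - x₀) ^ 2 - 4 * a := by
    have hsub : x₂ = a * b ^ 2 - x₀ - x₁ := by linear_combination hsum
    subst hsub
    linear_combination (4 * x₀) * hC12 - 4 * r0
  -- norms
  have hs_small : ‖a * b ^ 2 - x₀‖ < 1 := by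
    have heq : a * b ^ 2 - x₀ = (a - 1) * b ^ 2 + (b ^ 2 - 1) + (1 - x₀) := by ring
    rw [heq]
    apply lt_of_le_of_lt (Padic.nonarchimedean _ _)
    apply max_lt
    apply lt_of_le_of_lt (Padic.nonarchimedean _ _)
    apply max_lt
    · rw [Padic.padicNormE.mul, pow_two, Padic.padicNormE.mul, hnb]; simpa using ha
    · exact hsq_close b hb
    · rw [show (1 : ℚ_[p]) - x₀ = -(x₀ - 1) by ring, norm_neg]; exact hx0
  have h4norm : ‖(4 : ℚ_[p])‖ = 1 := by
    have : (4 : ℚ_[p]) = 2 * 2 := by norm_num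
    rw [this, Padic.padicNormE.mul, h2norm]; norm_num
  have h4a : ‖(4 : ℚ_[p]) * a‖ = 1 := by rw [Padic.padicNormE.mul, h4norm, hna]; norm_num
  have hlhs_small : ‖x₀ * (a * b ^ 2 - x₀) ^ 2‖ < 1 := by
    rw [Padic.padicNormE.mul, hnx0, one_mul, pow_two, Padic.padicNormE.mul]
    calc ‖a * b ^ 2 - x₀‖ * ‖a * b ^ 2 - x₀‖ ≤ 1 * ‖a * b ^ 2 - x₀‖ :=
        mul_le_mul_of_nonneg_right (le_of_lt hs_small) (norm_nonneg _)
      _ = ‖a * b ^ 2 - x₀‖ := one_mul _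
      _ < 1 := hs_small
  have hrhs : ‖x₀ * (a * b ^ 2 - x₀) ^ 2 - 4 * a‖ = 1 := by
    rw [sub_eq_add_neg, Padic.add_eq_max_of_ne
        (by rw [norm_neg, h4a]; exact ne_of_lt hlhs_small), norm_neg, h4a]
    exact max_eq_right hlhs_small.le
  have hnormsq : ‖x₁ - x₂‖ ^ 2 = 1 := by
    have hk : ‖x₀ * (x₁ - x₂) ^ 2‖ = 1 := by rw [key]; exact hrhs
    rw [Padic.padicNormE.mul, hnx0, one_mul, norm_pow] at hk
    exact hk
  have hmain : ‖x₁ - x₂‖ = 1 := by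
    nlinarith [norm_nonneg (x₁ - x₂), hnormsq]
  refine ⟨hmain, ?_⟩
  rw [Set.disjoint_left]
  intro y hy1 hy2
  rw [Metric.mem_ball] at hy1 hy2
  have a1 : ‖x₁ - y‖ < ‖b - 1‖ := by
    rw [norm_sub_rev, ← dist_eq_norm]; exact hy1
  have a2 : ‖y - x₂‖ < ‖b - 1‖ := by rw [← dist_eq_norm]; exact hy2
  have hd12 : ‖x₁ - x₂‖ ≤ max ‖x₁ - y‖ ‖y - x₂‖ := by
    have e : x₁ - x₂ = (x₁ - y) + (y - x₂) := by ring
    rw [e]; exact Padic.nonarchimedean _ _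
  have : ‖x₁ - x₂‖ < 1 := lt_of_le_of_lt hd12 (lt_trans (max_lt a1 a2) hb)
  rw [hmain] at this
  exact lt_irrefl _ this
end

section
/- Let p be a prime with p ≡ 1 (mod 4), p ≥ 5, and let α ∈ ℚ_p satisfy α² = −1. Let b ∈ E_p with b ≠ 1, a ∈ E_p, r = |b − 1|_p, and g(u) = a(b²u² + 1)/(b² + u²). Then for all x, y in the open ball B_r(α) = {z : |z − α|_p < r}, one has |g(x) − g(y)|_p = |x − y|_p / r. -/
lemma aux_dom {p : ℕ} [Fact p.Prime] {u v : ℚ_[p]} (h : ‖v‖ < ‖u‖) :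
    ‖u + v‖ = ‖u‖ := by
  rw [Padic.add_eq_max_of_ne h.ne', max_eq_left h.le]

theorem stmt17 (p : ℕ) [Fact p.Prime] (hp : 5 ≤ p) (hp4 : p % 4 = 1)
    (α : ℚ_[p]) (hα : α ^ 2 = -1) (a b : ℚ_[p])
    (ha : ‖a - 1‖ < 1) (hb : ‖b - 1‖ < 1) (hb1 : b ≠ 1) (x y : ℚ_[p])
    (hx : ‖x - α‖ < ‖b - 1‖) (hy : ‖y - α‖ < ‖b - 1‖) :
    ‖a * (b ^ 2 * x ^ 2 + 1) / (b ^ 2 + x ^ 2) -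
      a * (b ^ 2 * y ^ 2 + 1) / (b ^ 2 + y ^ 2)‖ = ‖x - y‖ / ‖b - 1‖ := by
  have hr0 : 0 < ‖b - 1‖ := by
    simpa using sub_ne_zero.mpr hb1
  -- ‖2‖ = 1
  have h2 : ‖(2 : ℚ_[p])‖ = 1 := by
    have hle : ‖((2 : ℤ) : ℚ_[p])‖ ≤ 1 := Padic.norm_int_le_one 2
    have hnd : ¬ (p : ℤ) ∣ 2 := by
      intro h
      have := Int.le_of_dvd (by norm_num) h
      omega
    have := (Padic.norm_intCast_lt_one_iff (p := p) (k := 2)).not.mpr (by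
      simpa using hnd)
    push_cast at hle this
    linarith [lt_or_eq_of_le hle]
  have hα1 : ‖α‖ = 1 := by
    have : ‖α‖ ^ 2 = 1 := by rw [← norm_pow, hα]; simp
    nlinarith [norm_nonneg α]
  have h2α : ‖α + α‖ = 1 := by
    have : α + α = 2 * α := by ring
    rw [this, norm_mul, h2, hα1, one_mul]
  -- ‖x + α‖ = 1, ‖y + α‖ = 1
  have hxr1 : ‖x - α‖ < 1 := hx.trans hb
  have hyr1 : ‖y - α‖ < 1 := hy.trans hb
  have hxα : ‖x + α‖ = 1 := by
    have e : x + α = (α + α) + (x - α) := by ring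
    rw [e, aux_dom (by rw [h2α]; exact hxr1), h2α]
  have hyα : ‖y + α‖ = 1 := by
    have e : y + α = (α + α) + (y - α) := by ring
    rw [e, aux_dom (by rw [h2α]; exact hyr1), h2α]
  -- ‖x² + 1‖ = ‖x - α‖, similarly for y
  have hx2 : ‖x ^ 2 + 1‖ = ‖x - α‖ := by
    have e : x ^ 2 + 1 = (x - α) * (x + α) := by
      have : x ^ 2 + 1 = x ^ 2 - α ^ 2 := by rw [hα]; ring
      rw [this]; ring
    rw [e, norm_mul, hxα, mul_one]
  have hy2 : ‖y ^ 2 + 1‖ = ‖y - α‖ := by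
    have e : y ^ 2 + 1 = (y - α) * (y + α) := by
      have : y ^ 2 + 1 = y ^ 2 - α ^ 2 := by rw [hα]; ring
      rw [this]; ring
    rw [e, norm_mul, hyα, mul_one]
  -- ‖b + 1‖ = 1, ‖b² - 1‖ = r
  have hbp1 : ‖b + 1‖ = 1 := by
    have e : b + 1 = (2 : ℚ_[p]) + (b - 1) := by ring
    rw [e, aux_dom (by rw [h2]; exact hb), h2]
  have hb2m1 : ‖b ^ 2 - 1‖ = ‖b - 1‖ := by
    have e : b ^ 2 - 1 = (b - 1) * (b + 1) := by ring
    rw [e, norm_mul, hbp1, mul_one]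
  have hb2p1 : ‖b ^ 2 + 1‖ = 1 := by
    have e : b ^ 2 + 1 = (2 : ℚ_[p]) + (b ^ 2 - 1) := by ring
    rw [e, aux_dom (by rw [h2, hb2m1]; exact hb), h2]
  have hb4 : ‖b ^ 4 - 1‖ = ‖b - 1‖ := by
    have e : b ^ 4 - 1 = (b ^ 2 - 1) * (b ^ 2 + 1) := by ring
    rw [e, norm_mul, hb2m1, hb2p1, mul_one]
  -- ‖b² + x²‖ = r, ‖b² + y²‖ = r
  have hbx : ‖b ^ 2 + x ^ 2‖ = ‖b - 1‖ := by
    have e : b ^ 2 + x ^ 2 = (b ^ 2 - 1) + (x ^ 2 + 1) := by ring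
    rw [e, aux_dom (by rw [hb2m1, hx2]; exact hx), hb2m1]
  have hby : ‖b ^ 2 + y ^ 2‖ = ‖b - 1‖ := by
    have e : b ^ 2 + y ^ 2 = (b ^ 2 - 1) + (y ^ 2 + 1) := by ring
    rw [e, aux_dom (by rw [hb2m1, hy2]; exact hy), hb2m1]
  have hbx0 : b ^ 2 + x ^ 2 ≠ 0 := by
    intro h; rw [h, norm_zero] at hbx; exact hr0.ne hbx
  have hby0 : b ^ 2 + y ^ 2 ≠ 0 := by
    intro h; rw [h, norm_zero] at hby; exact hr0.ne hby
  -- ‖a‖ = 1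
  have ha1 : ‖a‖ = 1 := by
    have e : a = (1 : ℚ_[p]) + (a - 1) := by ring
    rw [e, aux_dom (by simpa using ha)]; simp
  -- ‖x + y‖ = 1
  have hxy : ‖x + y‖ = 1 := by
    have e : x + y = (α + α) + ((x - α) + (y - α)) := by ring
    have hlt : ‖(x - α) + (y - α)‖ < ‖α + α‖ := by
      rw [h2α]
      exact lt_of_le_of_lt (Padic.nonarchimedean _ _) (max_lt hxr1 hyr1)
    rw [e, aux_dom hlt, h2α]
  -- rewrite the difference
  have key : a * (b ^ 2 * x ^ 2 + 1) / (b ^ 2 + x ^ 2) -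
      a * (b ^ 2 * y ^ 2 + 1) / (b ^ 2 + y ^ 2) =
      a * (b ^ 4 - 1) * (x - y) * (x + y) / ((b ^ 2 + x ^ 2) * (b ^ 2 + y ^ 2)) := by
    field_simp
    ring
  rw [key, norm_div, norm_mul, norm_mul, norm_mul, norm_mul,
    ha1, hb4, hxy, hbx, hby]
  field_simp
end
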